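/- Let I be a subinterval of (0,∞), let f : I → (0,∞) be a geometrically convex function, and let a, b ∈ I with a < b. Then f(√(ab)) ≤ (1/(ln b − ln a)) ∫_a^b (1/t)·√(f(t)·f(ab/t)) dt ≤ √(f(a) · f(b)). -/

import Mathlib

open MeasureTheory intervalIntegral Set

/-- If `f : I → (0,∞)` is geometrically convex on a subinterval `I` of `(0,∞)` and
`a, b ∈ I` with `a < b`, then
`f(√(ab)) ≤ (1/(ln b − ln a)) ∫_a^b (1/t)√(f t · f(ab/t)) dt ≤ √(f(a) · f(b))`. -/
theorem stmt_2 (I : Set ℝ) (hI : I ⊆ Set.Ioi (0 : ℝ)) (hI' : I.OrdConnected)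
    (f : ℝ → ℝ) (hfpos : ∀ x ∈ I, 0 < f x)
    (hgc : ∀ a ∈ I, ∀ b ∈ I, ∀ l ∈ Set.Icc (0 : ℝ) 1,
      f (a ^ l * b ^ (1 - l)) ≤ f a ^ l * f b ^ (1 - l))
    (a b : ℝ) (ha : a ∈ I) (hb : b ∈ I) (hab : a < b) :
    f (Real.sqrt (a * b)) ≤
      (1 / (Real.log b - Real.log a)) *
        ∫ t in a..b, (1 / t) * Real.sqrt (f t * f (a * b / t)) ∧
    (1 / (Real.log b - Real.log a)) *
        (∫ t in a..b, (1 / t) * Real.sqrt (f t * f (a * b / t))) ≤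
      Real.sqrt (f a * f b) := by
  have ha0 : (0:ℝ) < a := hI ha
  have hb0 : (0:ℝ) < b := hI hb
  have hIcc : Set.Icc a b ⊆ I := hI'.out ha hb
  set L : ℝ := Real.log b - Real.log a with hLdef
  have hL : 0 < L := sub_pos.2 (Real.log_lt_log ha0 hab)
  set F : ℝ → ℝ := fun t => (1 / t) * Real.sqrt (f t * f (a * b / t)) with hFdef
  -- membership facts
  have hmem : ∀ t ∈ Set.Icc a b, 0 < t ∧ t ∈ I ∧ a * b / t ∈ Set.Icc a b := by
    intro t ht
    have ht0 : 0 < t := lt_of_lt_of_le ha0 ht.1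
    refine ⟨ht0, hIcc ht, ?_, ?_⟩
    · rw [le_div_iff₀ ht0]
      exact mul_le_mul_of_nonneg_left ht.2 ha0.le
    · rw [div_le_iff₀ ht0]
      nlinarith [ht.1]
  -- lower pointwise bound
  have hlow : ∀ t ∈ Set.Icc a b, f (Real.sqrt (a * b)) ≤ Real.sqrt (f t * f (a * b / t)) := by
    intro t ht
    obtain ⟨ht0, htI, htu⟩ := hmem t ht
    have hu0 : 0 < a * b / t := lt_of_lt_of_le ha0 htu.1
    have key : Real.sqrt (a * b) = t ^ ((1:ℝ)/2) * (a * b / t) ^ (1 - (1:ℝ)/2) := by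
      norm_num
      rw [← Real.mul_rpow ht0.le hu0.le, mul_div_cancel₀ _ ht0.ne', Real.sqrt_eq_rpow]
    rw [key]
    calc f (t ^ ((1:ℝ)/2) * (a * b / t) ^ (1 - (1:ℝ)/2))
        ≤ f t ^ ((1:ℝ)/2) * f (a * b / t) ^ (1 - (1:ℝ)/2) :=
          hgc t htI _ (hIcc htu) ((1:ℝ)/2) ⟨by norm_num, by norm_num⟩
      _ = Real.sqrt (f t * f (a * b / t)) := by
          norm_num
          rw [← Real.mul_rpow (hfpos t htI).le (hfpos _ (hIcc htu)).le,
            Real.sqrt_eq_rpow]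
  -- upper pointwise bound
  have hup : ∀ t ∈ Set.Icc a b, Real.sqrt (f t * f (a * b / t)) ≤ Real.sqrt (f a * f b) := by
    intro t ht
    obtain ⟨ht0, htI, htu⟩ := hmem t ht
    have hu0 : 0 < a * b / t := lt_of_lt_of_le ha0 htu.1
    set l : ℝ := (Real.log b - Real.log t) / L with hldef
    have hl0 : 0 ≤ l := div_nonneg (sub_nonneg.2 (Real.log_le_log ht0 ht.2)) hL.le
    have hl1 : l ≤ 1 := by
      rw [div_le_one hL]
      have := Real.log_le_log ha0 ht.1
      simp only [hLdef]; linarith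
    have hteq : a ^ l * b ^ (1 - l) = t := by
      rw [Real.rpow_def_of_pos ha0, Real.rpow_def_of_pos hb0, ← Real.exp_add]
      rw [show Real.log a * l + Real.log b * (1 - l) = Real.log t by
        have hL' := hL.ne'
        simp only [hldef, hLdef] at hL' ⊢; field_simp; ring]
      exact Real.exp_log ht0
    have hueq : a ^ (1 - l) * b ^ (1 - (1 - l)) = a * b / t := by
      rw [Real.rpow_def_of_pos ha0, Real.rpow_def_of_pos hb0, ← Real.exp_add]
      rw [show Real.log a * (1 - l) + Real.log b * (1 - (1 - l))
          = Real.log (a * b / t) by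
        rw [Real.log_div (by positivity) ht0.ne', Real.log_mul ha0.ne' hb0.ne']
        have hL' := hL.ne'
        simp only [hldef, hLdef] at hL' ⊢; field_simp; ring]
      exact Real.exp_log hu0
    have h1 : f t ≤ f a ^ l * f b ^ (1 - l) := by
      rw [← hteq]; exact hgc a ha b hb l ⟨hl0, hl1⟩
    have h2 : f (a * b / t) ≤ f a ^ (1 - l) * f b ^ (1 - (1 - l)) := by
      rw [← hueq]; exact hgc a ha b hb (1 - l) ⟨by linarith, by linarith⟩
    have hfa := hfpos a ha
    have hfb := hfpos b hb
    have hprod : f t * f (a * b / t) ≤ f a * f b := by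
      calc f t * f (a * b / t)
          ≤ (f a ^ l * f b ^ (1 - l)) * (f a ^ (1 - l) * f b ^ (1 - (1 - l))) :=
            mul_le_mul h1 h2 (hfpos _ (hIcc htu)).le (by positivity)
        _ = (f a ^ l * f a ^ (1 - l)) * (f b ^ (1 - l) * f b ^ (1 - (1 - l))) := by ring
        _ = f a * f b := by
            rw [← Real.rpow_add hfa, ← Real.rpow_add hfb]
            norm_num
    exact Real.sqrt_le_sqrt hprod
  -- integrability of F
  have hgconv : ConvexOn ℝ (Set.Icc (Real.log a) (Real.log b))
      (fun x => Real.log (f (Real.exp x))) := by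
    refine ⟨convex_Icc _ _, ?_⟩
    intro x hx y hy p q hp hq hpq
    have hex : Real.exp x ∈ Set.Icc a b := by
      constructor
      · rw [← Real.exp_log ha0]; exact Real.exp_le_exp.2 hx.1
      · rw [← Real.exp_log hb0]; exact Real.exp_le_exp.2 hx.2
    have hey : Real.exp y ∈ Set.Icc a b := by
      constructor
      · rw [← Real.exp_log ha0]; exact Real.exp_le_exp.2 hy.1
      · rw [← Real.exp_log hb0]; exact Real.exp_le_exp.2 hy.2
    have hq' : q = 1 - p := by linarith
    have key : Real.exp (p • x + q • y) = Real.exp x ^ p * Real.exp y ^ (1 - p) := by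
      rw [smul_eq_mul, smul_eq_mul, Real.exp_add, mul_comm p x, mul_comm q y,
        Real.exp_mul, Real.exp_mul, hq']
    have harg : Real.exp (p • x + q • y) ∈ Set.Icc a b := by
      have hxy : p • x + q • y ∈ Set.Icc (Real.log a) (Real.log b) :=
        (convex_Icc _ _) hx hy hp hq hpq
      constructor
      · rw [← Real.exp_log ha0]; exact Real.exp_le_exp.2 hxy.1
      · rw [← Real.exp_log hb0]; exact Real.exp_le_exp.2 hxy.2
    have hle : f (Real.exp (p • x + q • y))
        ≤ f (Real.exp x) ^ p * f (Real.exp y) ^ (1 - p) := by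
      rw [key]
      exact hgc _ (hIcc hex) _ (hIcc hey) p ⟨hp, by linarith⟩
    have hfx := hfpos _ (hIcc hex)
    have hfy := hfpos _ (hIcc hey)
    calc Real.log (f (Real.exp (p • x + q • y)))
        ≤ Real.log (f (Real.exp x) ^ p * f (Real.exp y) ^ (1 - p)) :=
          Real.log_le_log (hfpos _ (hIcc harg)) hle
      _ = p • Real.log (f (Real.exp x)) + q • Real.log (f (Real.exp y)) := by
          rw [Real.log_mul (by positivity) (by positivity),
            Real.log_rpow hfx, Real.log_rpow hfy, hq']
          simp [smul_eq_mul]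
  have hgcont : ContinuousOn (fun x => Real.log (f (Real.exp x)))
      (Set.Ioo (Real.log a) (Real.log b)) := by
    have := hgconv.continuousOn_interior
    rwa [interior_Icc] at this
  have hlogmaps : Set.MapsTo Real.log (Set.Ioo a b) (Set.Ioo (Real.log a) (Real.log b)) :=
    fun t ht => ⟨Real.log_lt_log ha0 ht.1, Real.log_lt_log (lt_trans ha0 ht.1) ht.2⟩
  have hfcont : ContinuousOn f (Set.Ioo a b) := by
    have heq : Set.EqOn f (fun t => Real.exp (Real.log (f (Real.exp (Real.log t)))))
        (Set.Ioo a b) := by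
      intro t ht
      have ht0 : 0 < t := lt_trans ha0 ht.1
      simp only [Real.exp_log ht0,
        Real.exp_log (hfpos t (hIcc ⟨ht.1.le, ht.2.le⟩))]
    refine ContinuousOn.congr ?_ heq
    exact Real.continuous_exp.comp_continuousOn
      (hgcont.comp (Real.continuousOn_log.mono fun t ht =>
        (ne_of_gt (lt_trans ha0 ht.1))) hlogmaps)
  have hdivmaps : Set.MapsTo (fun t => a * b / t) (Set.Ioo a b) (Set.Ioo a b) := by
    intro t ht
    have ht0 : 0 < t := lt_trans ha0 ht.1
    constructor
    · rw [lt_div_iff₀ ht0]; nlinarith [ht.2]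
    · rw [div_lt_iff₀ ht0]; nlinarith [ht.1]
  have hdivcont : ContinuousOn (fun t => a * b / t) (Set.Ioo a b) :=
    continuousOn_const.div continuousOn_id fun t ht => (ne_of_gt (lt_trans ha0 ht.1))
  have hFcont : ContinuousOn F (Set.Ioo a b) := by
    refine ContinuousOn.mul ?_ ?_
    · exact continuousOn_const.div continuousOn_id fun t ht =>
        (ne_of_gt (lt_trans ha0 ht.1))
    · exact (hfcont.mul (hfcont.comp hdivcont hdivmaps)).sqrt
  have hFbound : ∀ t ∈ Set.Ioo a b, ‖F t‖ ≤ Real.sqrt (f a * f b) * (1 / a) := by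
    intro t ht
    have ht' : t ∈ Set.Icc a b := ⟨ht.1.le, ht.2.le⟩
    have ht0 : 0 < t := lt_trans ha0 ht.1
    have hF0 : 0 ≤ F t := by
      simp only [hFdef]
      positivity
    rw [Real.norm_eq_abs, abs_of_nonneg hF0]
    simp only [hFdef]
    have h1 : Real.sqrt (f t * f (a * b / t)) ≤ Real.sqrt (f a * f b) := hup t ht'
    have h2 : (1:ℝ)/t ≤ 1/a := by
      apply one_div_le_one_div_of_le ha0 ht.1.le
    calc 1 / t * Real.sqrt (f t * f (a * b / t))
        ≤ 1 / a * Real.sqrt (f a * f b) :=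
          mul_le_mul h2 h1 (Real.sqrt_nonneg _) (by positivity)
      _ = Real.sqrt (f a * f b) * (1 / a) := by ring
  have hFint : IntervalIntegrable F volume a b := by
    rw [intervalIntegrable_iff_integrableOn_Ioo_of_le hab.le]
    refine ⟨hFcont.aestronglyMeasurable measurableSet_Ioo, ?_⟩
    exact HasFiniteIntegral.restrict_of_bounded (C := Real.sqrt (f a * f b) * (1 / a))
      measure_Ioo_lt_top (ae_restrict_of_forall_mem measurableSet_Ioo hFbound)
  -- integrability of the comparison functions
  have hcint : ∀ c : ℝ, IntervalIntegrable (fun t => c * (1 / t)) volume a b := by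
    intro c
    apply ContinuousOn.intervalIntegrable
    apply continuousOn_const.mul
    apply continuousOn_const.div continuousOn_id
    intro t ht
    rw [Set.uIcc_of_le hab.le] at ht
    exact ne_of_gt (lt_of_lt_of_le ha0 ht.1)
  have hconst_int : ∀ c : ℝ, ∫ t in a..b, c * (1 / t) = c * L := by
    intro c
    rw [intervalIntegral.integral_const_mul, integral_one_div_of_pos ha0 hb0,
      Real.log_div hb0.ne' ha0.ne']
  -- lower integral inequality
  have hlowint : f (Real.sqrt (a * b)) * L ≤ ∫ t in a..b, F t := by
    rw [← hconst_int (f (Real.sqrt (a * b)))]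
    apply intervalIntegral.integral_mono_on hab.le (hcint _) hFint
    intro t ht
    have ht0 : 0 < t := lt_of_lt_of_le ha0 ht.1
    simp only [hFdef]
    rw [mul_comm]
    exact mul_le_mul_of_nonneg_left (hlow t ht) (by positivity)
  -- upper integral inequality
  have hupint : (∫ t in a..b, F t) ≤ Real.sqrt (f a * f b) * L := by
    rw [← hconst_int (Real.sqrt (f a * f b))]
    apply intervalIntegral.integral_mono_on hab.le hFint (hcint _)
    intro t ht
    have ht0 : 0 < t := lt_of_lt_of_le ha0 ht.1
    simp only [hFdef]
    calc 1 / t * Real.sqrt (f t * f (a * b / t))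
        ≤ 1 / t * Real.sqrt (f a * f b) :=
          mul_le_mul_of_nonneg_left (hup t ht) (by positivity)
      _ = Real.sqrt (f a * f b) * (1 / t) := by ring
  constructor
  · rw [one_div_mul_eq_div, le_div_iff₀ hL]
    exact hlowint
  · rw [one_div_mul_eq_div, div_le_iff₀ hL]
    exact hupint
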